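/- For any positive masses m₁, m₂, m₃, m₄, the set 𝓜 = {r ∈ ℝ⁶ : I(r) = 1 and P(r) = 0} is homeomorphic to S² × S², the product of two 2-spheres (indeed, to the oriented Grassmannian Gr₊(2,4)). -/

import Mathlib

/-- The Ptolemy function `P` as a function of
`r = (r₁₂, r₁₃, r₁₄, r₂₃, r₂₄, r₃₄) ∈ ℝ⁶`. -/
def Pvec (r : Fin 6 → ℝ) : ℝ :=
  r 0 * r 5 + r 2 * r 3 - r 1 * r 4

/-- The moment of inertia `I` as a function of `r ∈ ℝ⁶`. -/
noncomputable def Ivec (m1 m2 m3 m4 : ℝ) (r : Fin 6 → ℝ) : ℝ :=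
  (1/(2*(m1 + m2 + m3 + m4))) *
    (m1*m2*(r 0)^2 + m1*m3*(r 1)^2 + m1*m4*(r 2)^2 +
     m2*m3*(r 3)^2 + m2*m4*(r 4)^2 + m3*m4*(r 5)^2)

/-- The set `𝓜 = {r ∈ ℝ⁶ : I(r) = 1, P(r) = 0}`. -/
noncomputable def setM (m1 m2 m3 m4 : ℝ) : Set (Fin 6 → ℝ) :=
  {r | Ivec m1 m2 m3 m4 r = 1 ∧ Pvec r = 0}

local notation "E3" => EuclideanSpace ℝ (Fin 3)

lemma sphere_mem_iff (U : E3) :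
    U ∈ Metric.sphere (0 : E3) 1 ↔ (U 0)^2 + (U 1)^2 + (U 2)^2 = 1 := by
  rw [mem_sphere_zero_iff_norm, EuclideanSpace.norm_eq]
  rw [show (∑ i, ‖U i‖ ^ 2) = (U 0)^2 + (U 1)^2 + (U 2)^2 by
    simp [Fin.sum_univ_three, Real.norm_eq_abs, sq_abs]]
  constructor
  · intro h
    have := Real.sq_sqrt (by positivity : (0:ℝ) ≤ (U 0)^2 + (U 1)^2 + (U 2)^2)
    rw [h] at this; linarith [this]
  · intro h; rw [h, Real.sqrt_one]

lemma cons_val_five' {α : Type*} (a b c d e f : α) : ![a,b,c,d,e,f] 5 = f := rfl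

lemma cons_val_four' {α : Type*} (a b c d e f : α) : ![a,b,c,d,e,f] 4 = e := rfl

lemma cons_val_three' {α : Type*} (a b c d e f : α) : ![a,b,c,d,e,f] 3 = d := rfl

lemma cons_val_two' {α : Type*} (a b c d e f : α) : ![a,b,c,d,e,f] 2 = c := rfl

set_option maxHeartbeats 2000000 in
lemma aux (s1 s2 s3 s4 D : ℝ) (h1 : 0 < s1) (h2 : 0 < s2) (h3 : 0 < s3) (h4 : 0 < s4)
    (hD : 0 < D) (hD2 : D^2 = 2*(s1^2 + s2^2 + s3^2 + s4^2)) :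
    Nonempty (↥(setM (s1^2) (s2^2) (s3^2) (s4^2)) ≃ₜ
      (Metric.sphere (0 : E3) 1 × Metric.sphere (0 : E3) 1)) := by
  have hDne : D ≠ 0 := hD.ne'
  have h1' := h1.ne'
  have h2' := h2.ne'
  have h3' := h3.ne'
  have h4' := h4.ne'
  -- membership in setM
  have hmem : ∀ r : Fin 6 → ℝ, r ∈ setM (s1^2) (s2^2) (s3^2) (s4^2) ↔
      ((s1*s2*r 0)^2 + (s1*s3*r 1)^2 + (s1*s4*r 2)^2 +
       (s2*s3*r 3)^2 + (s2*s4*r 4)^2 + (s3*s4*r 5)^2 = D^2 ∧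
       r 0 * r 5 + r 2 * r 3 - r 1 * r 4 = 0) := by
    intro r
    have hM : (0:ℝ) < 2*(s1^2 + s2^2 + s3^2 + s4^2) := by positivity
    simp only [setM, Ivec, Pvec, Set.mem_setOf_eq]
    constructor
    · rintro ⟨hI, hP⟩
      refine ⟨?_, hP⟩
      field_simp at hI
      linear_combination hI - hD2
    · rintro ⟨hI, hP⟩
      refine ⟨?_, hP⟩
      field_simp
      linear_combination hI + hD2
  -- the forward map
  set eqv := (PiLp.continuousLinearEquiv 2 ℝ (fun _ : Fin 3 => ℝ)).symm with heqv
  set fwd : (Fin 6 → ℝ) → E3 × E3 := fun r =>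
    (eqv ![(s1*s2*r 0 + s3*s4*r 5)/D, (s1*s4*r 2 + s2*s3*r 3)/D, (s1*s3*r 1 - s2*s4*r 4)/D],
     eqv ![(s1*s2*r 0 - s3*s4*r 5)/D, (s1*s4*r 2 - s2*s3*r 3)/D, (s1*s3*r 1 + s2*s4*r 4)/D])
    with hfwd
  set bwd : E3 × E3 → (Fin 6 → ℝ) := fun p =>
    ![D*(p.1 0 + p.2 0)/(2*(s1*s2)), D*(p.1 2 + p.2 2)/(2*(s1*s3)),
      D*(p.1 1 + p.2 1)/(2*(s1*s4)), D*(p.1 1 - p.2 1)/(2*(s2*s3)),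
      D*(p.2 2 - p.1 2)/(2*(s2*s4)), D*(p.1 0 - p.2 0)/(2*(s3*s4))] with hbwd
  have heval : ∀ (v : Fin 3 → ℝ) (i : Fin 3), (eqv v) i = v i := fun v i => rfl
  -- forward maps into spheres
  have hfwd_mem : ∀ r ∈ setM (s1^2) (s2^2) (s3^2) (s4^2),
      (fwd r).1 ∈ Metric.sphere (0 : E3) 1 ∧ (fwd r).2 ∈ Metric.sphere (0 : E3) 1 := by
    intro r hr
    obtain ⟨hI, hP⟩ := (hmem r).mp hr
    constructor
    · rw [sphere_mem_iff]
      simp only [hfwd, heval, Matrix.cons_val_zero, Matrix.cons_val_one, Matrix.head_cons,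
        Matrix.cons_val_two, Matrix.tail_cons]
      field_simp
      linear_combination hI + 2*s1*s2*s3*s4*hP
    · rw [sphere_mem_iff]
      simp only [hfwd, heval, Matrix.cons_val_zero, Matrix.cons_val_one, Matrix.head_cons,
        Matrix.cons_val_two, Matrix.tail_cons]
      field_simp
      linear_combination hI - 2*s1*s2*s3*s4*hP
  -- backward maps into setM
  have hbwd_mem : ∀ p : E3 × E3, p.1 ∈ Metric.sphere (0 : E3) 1 →
      p.2 ∈ Metric.sphere (0 : E3) 1 → bwd p ∈ setM (s1^2) (s2^2) (s3^2) (s4^2) := by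
    intro p hU hW
    rw [sphere_mem_iff] at hU hW
    rw [hmem]
    constructor
    · simp only [hbwd, Matrix.cons_val_zero, Matrix.cons_val_one, Matrix.head_cons,
        Matrix.cons_val_two, Matrix.tail_cons, cons_val_two', cons_val_three', cons_val_four',
        cons_val_five']
      field_simp
      linear_combination 2*hU + 2*hW
    · simp only [hbwd, Matrix.cons_val_zero, Matrix.cons_val_one, Matrix.head_cons,
        Matrix.cons_val_two, Matrix.tail_cons, cons_val_two', cons_val_three', cons_val_four',
        cons_val_five']
      field_simp
      linear_combination D^2*hU - D^2*hW
  -- round trips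
  have hlr : ∀ r : Fin 6 → ℝ, bwd (fwd r) = r := by
    intro r
    have e0 : bwd (fwd r) 0 = r 0 := by
      simp only [hbwd, hfwd, heval, Matrix.cons_val_zero, Matrix.cons_val_one, Matrix.head_cons, Matrix.cons_val_two, Matrix.tail_cons, cons_val_two', cons_val_three', cons_val_four', cons_val_five', Fin.isValue]
      field_simp
      ring
    have e1 : bwd (fwd r) 1 = r 1 := by
      simp only [hbwd, hfwd, heval, Matrix.cons_val_zero, Matrix.cons_val_one, Matrix.head_cons, Matrix.cons_val_two, Matrix.tail_cons, cons_val_two', cons_val_three', cons_val_four', cons_val_five', Fin.isValue]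
      field_simp
      ring
    have e2 : bwd (fwd r) 2 = r 2 := by
      simp only [hbwd, hfwd, heval, Matrix.cons_val_zero, Matrix.cons_val_one, Matrix.head_cons, Matrix.cons_val_two, Matrix.tail_cons, cons_val_two', cons_val_three', cons_val_four', cons_val_five', Fin.isValue]
      field_simp
      ring
    have e3 : bwd (fwd r) 3 = r 3 := by
      simp only [hbwd, hfwd, heval, Matrix.cons_val_zero, Matrix.cons_val_one, Matrix.head_cons, Matrix.cons_val_two, Matrix.tail_cons, cons_val_two', cons_val_three', cons_val_four', cons_val_five', Fin.isValue]
      field_simp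
      ring
    have e4 : bwd (fwd r) 4 = r 4 := by
      simp only [hbwd, hfwd, heval, Matrix.cons_val_zero, Matrix.cons_val_one, Matrix.head_cons, Matrix.cons_val_two, Matrix.tail_cons, cons_val_two', cons_val_three', cons_val_four', cons_val_five', Fin.isValue]
      field_simp
      ring
    have e5 : bwd (fwd r) 5 = r 5 := by
      simp only [hbwd, hfwd, heval, Matrix.cons_val_zero, Matrix.cons_val_one, Matrix.head_cons, Matrix.cons_val_two, Matrix.tail_cons, cons_val_two', cons_val_three', cons_val_four', cons_val_five', Fin.isValue]
      field_simp
      ring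
    funext i
    fin_cases i
    exacts [e0, e1, e2, e3, e4, e5]
  have hrl : ∀ p : E3 × E3, fwd (bwd p) = p := by
    intro p
    have g0 : ∀ i : Fin 3, (fwd (bwd p)).1 i = p.1 i := by
      intro i
      have a0 : (fwd (bwd p)).1 0 = p.1 0 := by
        simp only [hbwd, hfwd, heval, Matrix.cons_val_zero, Matrix.cons_val_one, Matrix.head_cons, Matrix.cons_val_two, Matrix.tail_cons, cons_val_two', cons_val_three', cons_val_four', cons_val_five', Fin.isValue]
        field_simp
        ring
      have a1 : (fwd (bwd p)).1 1 = p.1 1 := by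
        simp only [hbwd, hfwd, heval, Matrix.cons_val_zero, Matrix.cons_val_one, Matrix.head_cons, Matrix.cons_val_two, Matrix.tail_cons, cons_val_two', cons_val_three', cons_val_four', cons_val_five', Fin.isValue]
        field_simp
        ring
      have a2 : (fwd (bwd p)).1 2 = p.1 2 := by
        simp only [hbwd, hfwd, heval, Matrix.cons_val_zero, Matrix.cons_val_one, Matrix.head_cons, Matrix.cons_val_two, Matrix.tail_cons, cons_val_two', cons_val_three', cons_val_four', cons_val_five', Fin.isValue]
        field_simp
        ring
      fin_cases i
      exacts [a0, a1, a2]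
    have g1 : ∀ i : Fin 3, (fwd (bwd p)).2 i = p.2 i := by
      intro i
      have a0 : (fwd (bwd p)).2 0 = p.2 0 := by
        simp only [hbwd, hfwd, heval, Matrix.cons_val_zero, Matrix.cons_val_one, Matrix.head_cons, Matrix.cons_val_two, Matrix.tail_cons, cons_val_two', cons_val_three', cons_val_four', cons_val_five', Fin.isValue]
        field_simp
        ring
      have a1 : (fwd (bwd p)).2 1 = p.2 1 := by
        simp only [hbwd, hfwd, heval, Matrix.cons_val_zero, Matrix.cons_val_one, Matrix.head_cons, Matrix.cons_val_two, Matrix.tail_cons, cons_val_two', cons_val_three', cons_val_four', cons_val_five', Fin.isValue]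
        field_simp
        ring
      have a2 : (fwd (bwd p)).2 2 = p.2 2 := by
        simp only [hbwd, hfwd, heval, Matrix.cons_val_zero, Matrix.cons_val_one, Matrix.head_cons, Matrix.cons_val_two, Matrix.tail_cons, cons_val_two', cons_val_three', cons_val_four', cons_val_five', Fin.isValue]
        field_simp
        ring
      fin_cases i
      exacts [a0, a1, a2]
    exact Prod.ext (PiLp.ext g0) (PiLp.ext g1)
  -- continuity
  have hpc : ∀ (a b c : (Fin 6 → ℝ) → ℝ), Continuous a → Continuous b → Continuous c →
      Continuous (fun r => eqv ![a r, b r, c r]) := by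
    intro a b c ha hb hc
    apply (eqv.continuous).comp
    apply continuous_pi
    intro i
    have b0 : Continuous fun r : Fin 6 → ℝ => ![a r, b r, c r] 0 := ha
    have b1 : Continuous fun r : Fin 6 → ℝ => ![a r, b r, c r] 1 := hb
    have b2 : Continuous fun r : Fin 6 → ℝ => ![a r, b r, c r] 2 := hc
    fin_cases i
    exacts [b0, b1, b2]
  have capp : ∀ k : Fin 6, Continuous fun r : Fin 6 → ℝ => r k := fun k => continuous_apply k
  have hcf : Continuous fwd := by
    apply Continuous.prodMk <;>
      [apply hpc ((fun r => (s1*s2*r 0 + s3*s4*r 5)/D)) _ _;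
       apply hpc ((fun r => (s1*s2*r 0 - s3*s4*r 5)/D)) _ _] <;>
      exact Continuous.div_const (by continuity) D
  have hcb : Continuous bwd := by
    have e0 : Continuous fun p : E3 × E3 => p.1 0 :=
      (EuclideanSpace.proj (0 : Fin 3)).continuous.comp continuous_fst
    have e1 : Continuous fun p : E3 × E3 => p.1 1 :=
      (EuclideanSpace.proj (1 : Fin 3)).continuous.comp continuous_fst
    have e2 : Continuous fun p : E3 × E3 => p.1 2 :=
      (EuclideanSpace.proj (2 : Fin 3)).continuous.comp continuous_fst
    have f0 : Continuous fun p : E3 × E3 => p.2 0 :=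
      (EuclideanSpace.proj (0 : Fin 3)).continuous.comp continuous_snd
    have f1 : Continuous fun p : E3 × E3 => p.2 1 :=
      (EuclideanSpace.proj (1 : Fin 3)).continuous.comp continuous_snd
    have f2 : Continuous fun p : E3 × E3 => p.2 2 :=
      (EuclideanSpace.proj (2 : Fin 3)).continuous.comp continuous_snd
    apply continuous_pi
    intro i
    have b0 : Continuous fun p : E3 × E3 => bwd p 0 :=
      Continuous.div_const (continuous_const.mul (e0.add f0)) _
    have b1 : Continuous fun p : E3 × E3 => bwd p 1 :=
      Continuous.div_const (continuous_const.mul (e2.add f2)) _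
    have b2 : Continuous fun p : E3 × E3 => bwd p 2 :=
      Continuous.div_const (continuous_const.mul (e1.add f1)) _
    have b3 : Continuous fun p : E3 × E3 => bwd p 3 :=
      Continuous.div_const (continuous_const.mul (e1.sub f1)) _
    have b4 : Continuous fun p : E3 × E3 => bwd p 4 :=
      Continuous.div_const (continuous_const.mul (f2.sub e2)) _
    have b5 : Continuous fun p : E3 × E3 => bwd p 5 :=
      Continuous.div_const (continuous_const.mul (e0.sub f0)) _
    fin_cases i
    exacts [b0, b1, b2, b3, b4, b5]
  exact ⟨{
    toFun := fun r => ⟨⟨(fwd r.1).1, (hfwd_mem r.1 r.2).1⟩, ⟨(fwd r.1).2, (hfwd_mem r.1 r.2).2⟩⟩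
    invFun := fun p => ⟨bwd (p.1.1, p.2.1), hbwd_mem (p.1.1, p.2.1) p.1.2 p.2.2⟩
    left_inv := fun r => Subtype.ext (by simpa using hlr r.1)
    right_inv := fun p => by
      have := hrl (p.1.1, p.2.1)
      refine Prod.ext (Subtype.ext ?_) (Subtype.ext ?_)
      · simpa using congrArg Prod.fst this
      · simpa using congrArg Prod.snd this
    continuous_toFun := by
      apply Continuous.prodMk
      · exact Continuous.subtype_mk ((hcf.comp continuous_subtype_val).fst) _
      · exact Continuous.subtype_mk ((hcf.comp continuous_subtype_val).snd) _
    continuous_invFun := by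
      apply Continuous.subtype_mk
      exact hcb.comp (((continuous_subtype_val.comp continuous_fst)).prodMk
        (continuous_subtype_val.comp continuous_snd)) }⟩

/-- For positive masses, `𝓜` is homeomorphic to `S² × S²`. -/
theorem setM_homeomorph_sphere_prod_sphere (m1 m2 m3 m4 : ℝ)
    (hm1 : 0 < m1) (hm2 : 0 < m2) (hm3 : 0 < m3) (hm4 : 0 < m4) :
    Nonempty (↥(setM m1 m2 m3 m4) ≃ₜ
      (Metric.sphere (0 : EuclideanSpace ℝ (Fin 3)) 1 ×
        Metric.sphere (0 : EuclideanSpace ℝ (Fin 3)) 1)) := by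
  have e1 : m1 = (Real.sqrt m1)^2 := (Real.sq_sqrt hm1.le).symm
  have e2 : m2 = (Real.sqrt m2)^2 := (Real.sq_sqrt hm2.le).symm
  have e3 : m3 = (Real.sqrt m3)^2 := (Real.sq_sqrt hm3.le).symm
  have e4 : m4 = (Real.sqrt m4)^2 := (Real.sq_sqrt hm4.le).symm
  rw [e1, e2, e3, e4]
  exact aux _ _ _ _ (Real.sqrt (2*(m1+m2+m3+m4)))
    (Real.sqrt_pos.mpr hm1) (Real.sqrt_pos.mpr hm2)
    (Real.sqrt_pos.mpr hm3) (Real.sqrt_pos.mpr hm4)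
    (Real.sqrt_pos.mpr (by positivity))
    (by rw [Real.sq_sqrt (by positivity), Real.sq_sqrt hm1.le, Real.sq_sqrt hm2.le,
          Real.sq_sqrt hm3.le, Real.sq_sqrt hm4.le])
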